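/- Let d be a metric on ℂ and define, for a curve, its d-length via suprema over partitions. Fix s > 0 and a set π ⊆ { z : s ≤ |z| ≤ 2s } with the following two properties: (i) every Euclidean-continuous path in ℂ from a point of the closed ball of radius s around 0 to a point outside the open ball of radius 3s around 0 intersects π; (ii) sup{ d(x, y) : x, y ∈ π } < L, where L := inf{ len(Q; d) : Q a Euclidean-continuous path with one endpoint on the circle of radius 2s and the other endpoint on the circle of radius 3s around 0 }. Then no d-geodesic between two points of the open ball of radius s around 0 exits the open ball of radius 3s around 0. Here a d-geodesic between u and v is a Euclidean-continuous curve from u to v whose d-length equals d(u, v). -/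

import Mathlib

open scoped ENNReal

/-- The `d`-length of a curve `Q : [0,1] → ℂ`: the supremum over partitions
`0 = t 0 < ⋯ < t n = 1` of the sums of `d`-distances between consecutive points. -/
noncomputable def pathLen10 (d : ℂ → ℂ → ℝ) (Q : ℝ → ℂ) : ℝ≥0∞ :=
  ⨆ (n : ℕ) (t : Fin (n + 1) → ℝ) (_ : StrictMono t) (_ : t 0 = 0)
    (_ : t (Fin.last n) = 1),
    ENNReal.ofReal (∑ i : Fin n, d (Q (t i.castSucc)) (Q (t i.succ)))

lemma strictMono_cons' {m : ℕ} {r : Fin (m+1) → ℝ} {y : ℝ}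
    (hr : StrictMono r) (hy : y < r 0) : StrictMono (Fin.cons y r : Fin (m+2) → ℝ) := by
  rw [Fin.strictMono_iff_lt_succ]
  intro i
  induction i using Fin.cases with
  | zero => simpa using hy
  | succ j =>
      have := (Fin.strictMono_iff_lt_succ.mp hr) j
      simpa using this

lemma strictMono_snoc' {m : ℕ} {r : Fin (m+1) → ℝ} {x : ℝ}
    (hr : StrictMono r) (hx : r (Fin.last m) < x) : StrictMono (Fin.snoc r x : Fin (m+2) → ℝ) := by
  rw [Fin.strictMono_iff_lt_succ]
  intro i
  induction i using Fin.lastCases with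
  | last => simpa using hx
  | cast j =>
      have := (Fin.strictMono_iff_lt_succ.mp hr) j
      simpa [Fin.succ_castSucc, -Fin.castSucc_succ] using this

lemma sum_cons' (d : ℂ → ℂ → ℝ) (P : ℝ → ℂ) {m : ℕ} (r : Fin (m+1) → ℝ) (y : ℝ) :
    ∑ i : Fin (m+1), d (P ((Fin.cons y r : Fin (m+2) → ℝ) i.castSucc))
        (P ((Fin.cons y r : Fin (m+2) → ℝ) i.succ))
    = d (P y) (P (r 0)) + ∑ i : Fin m, d (P (r i.castSucc)) (P (r i.succ)) := by
  rw [Fin.sum_univ_succ]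
  simp [← Fin.succ_castSucc]

lemma sum_snoc' (d : ℂ → ℂ → ℝ) (P : ℝ → ℂ) {m : ℕ} (r : Fin (m+1) → ℝ) (x : ℝ) :
    ∑ i : Fin (m+1), d (P ((Fin.snoc r x : Fin (m+2) → ℝ) i.castSucc))
        (P ((Fin.snoc r x : Fin (m+2) → ℝ) i.succ))
    = (∑ i : Fin m, d (P (r i.castSucc)) (P (r i.succ))) + d (P (r (Fin.last m))) (P x) := by
  rw [Fin.sum_univ_castSucc]
  simp [Fin.succ_castSucc, -Fin.castSucc_succ]

lemma cons_last' {m : ℕ} (r : Fin (m+1) → ℝ) (y : ℝ) :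
    (Fin.cons y r : Fin (m+2) → ℝ) (Fin.last (m+1)) = r (Fin.last m) := by
  rw [← Fin.succ_last, Fin.cons_succ]

lemma snoc_zero' {m : ℕ} (r : Fin (m+1) → ℝ) (x : ℝ) :
    (Fin.snoc r x : Fin (m+2) → ℝ) 0 = r 0 := by
  rw [show (0 : Fin (m+2)) = Fin.castSucc 0 from rfl, Fin.snoc_castSucc]

lemma le_pathLen10 (d : ℂ → ℂ → ℝ) (Q : ℝ → ℂ) {m : ℕ} (r : Fin (m+1) → ℝ)
    (hr : StrictMono r) (h0 : r 0 = 0) (h1 : r (Fin.last m) = 1) :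
    ENNReal.ofReal (∑ i : Fin m, d (Q (r i.castSucc)) (Q (r i.succ))) ≤ pathLen10 d Q :=
  le_iSup_of_le m (le_iSup_of_le r (le_iSup_of_le hr (le_iSup_of_le h0 (le_iSup_of_le h1 le_rfl))))

/-- "Cheap loop traps geodesics": if `Γ ⊆ {s ≤ |z| ≤ 2s}` separates `B̄_s(0)` from the
complement of `B_{3s}(0)` and has `d`-diameter smaller than the `d`-distance across the
annulus `A_{2s,3s}(0)`, then no `d`-geodesic between two points of `B_s(0)` exits
`B_{3s}(0)`. -/
theorem stmt_10 (d : ℂ → ℂ → ℝ)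
    (hd_nonneg : ∀ u v, 0 ≤ d u v) (hd_self : ∀ u, d u u = 0)
    (hd_symm : ∀ u v, d u v = d v u) (hd_tri : ∀ u v x, d u x ≤ d u v + d v x)
    (hd_pos : ∀ u v, d u v = 0 → u = v)
    (s : ℝ) (hs : 0 < s) (Γ : Set ℂ)
    (hΓ : Γ ⊆ {z : ℂ | s ≤ ‖z‖ ∧ ‖z‖ ≤ 2 * s})
    (hsep : ∀ Q : ℝ → ℂ, ContinuousOn Q (Set.Icc 0 1) →
      Q 0 ∈ Metric.closedBall (0 : ℂ) s → Q 1 ∉ Metric.ball (0 : ℂ) (3 * s) →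
      ∃ t ∈ Set.Icc (0 : ℝ) 1, Q t ∈ Γ)
    (hdiam : (⨆ x ∈ Γ, ⨆ y ∈ Γ, ENNReal.ofReal (d x y)) <
      ⨅ (Q : ℝ → ℂ) (_ : ContinuousOn Q (Set.Icc 0 1))
        (_ : Q 0 ∈ Metric.sphere (0 : ℂ) (2 * s))
        (_ : Q 1 ∈ Metric.sphere (0 : ℂ) (3 * s)), pathLen10 d Q) :
    ∀ u ∈ Metric.ball (0 : ℂ) s, ∀ v ∈ Metric.ball (0 : ℂ) s,
      ∀ P : ℝ → ℂ, ContinuousOn P (Set.Icc 0 1) → P 0 = u → P 1 = v →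
        pathLen10 d P = ENNReal.ofReal (d u v) →
        ∀ t ∈ Set.Icc (0 : ℝ) 1, P t ∈ Metric.ball (0 : ℂ) (3 * s) := by
  intro u hu v hv P hP hP0 hP1 hlen t0 ht0
  by_contra hout
  have hu' : ‖u‖ < s := by simpa [Complex.dist_eq] using hu
  have hv' : ‖v‖ < s := by simpa [Complex.dist_eq] using hv
  have hout' : 3 * s ≤ ‖P t0‖ := by
    have := hout
    simp only [Metric.mem_ball, Complex.dist_eq, sub_zero, not_lt] at this
    exact this
  -- Step 1: find t1 ∈ [0, t0] with P t1 ∈ Γ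
  have hQ1cont : ContinuousOn (fun r : ℝ => P (r * t0)) (Set.Icc 0 1) := by
    have hm : Set.MapsTo (fun r : ℝ => r * t0) (Set.Icc 0 1) (Set.Icc 0 1) := by
      intro r hr
      simp only [Set.mem_Icc] at hr ⊢
      exact ⟨mul_nonneg hr.1 ht0.1, by nlinarith [hr.1, hr.2, ht0.1, ht0.2]⟩
    exact hP.comp ((by fun_prop : Continuous (fun r : ℝ => r * t0)).continuousOn) hm
  obtain ⟨ρ₁, hρ₁, hg1⟩ := hsep (fun r : ℝ => P (r * t0)) hQ1cont
    (by simp only [zero_mul, hP0]; exact Metric.ball_subset_closedBall hu)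
    (by simp only [one_mul]; exact hout)
  set t1 : ℝ := ρ₁ * t0 with ht1def
  have ht1nonneg : 0 ≤ t1 := mul_nonneg hρ₁.1 ht0.1
  have ht1le : t1 ≤ t0 := by nlinarith [hρ₁.1, hρ₁.2, ht0.1]
  have habs1 := hΓ hg1
  -- Step 2: find t2 ∈ [t0, 1] with P t2 ∈ Γ
  have hQ2cont : ContinuousOn (fun r : ℝ => P (1 - r * (1 - t0))) (Set.Icc 0 1) := by
    have hm : Set.MapsTo (fun r : ℝ => 1 - r * (1 - t0)) (Set.Icc 0 1) (Set.Icc 0 1) := by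
      intro r hr
      simp only [Set.mem_Icc] at hr ⊢
      constructor
      · nlinarith [hr.1, hr.2, ht0.1, ht0.2]
      · nlinarith [hr.1, ht0.2]
    exact hP.comp ((by fun_prop : Continuous (fun r : ℝ => 1 - r * (1 - t0))).continuousOn) hm
  obtain ⟨ρ₂, hρ₂, hg2⟩ := hsep (fun r : ℝ => P (1 - r * (1 - t0))) hQ2cont
    (by simp only [zero_mul, sub_zero, hP1]; exact Metric.ball_subset_closedBall hv)
    (by simp only [one_mul, sub_sub_cancel]; exact hout)
  set t2 : ℝ := 1 - ρ₂ * (1 - t0) with ht2def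
  have ht2ge : t0 ≤ t2 := by nlinarith [hρ₂.1, hρ₂.2, ht0.2]
  have ht2le : t2 ≤ 1 := by nlinarith [hρ₂.1, hρ₂.2, ht0.2]
  have habs2 := hΓ hg2
  -- positions
  have ht1pos : 0 < t1 := by
    rcases ht1nonneg.lt_or_eq with h | h
    · exact h
    · exfalso; rw [← h, hP0] at habs1; exact absurd habs1.1 (by linarith)
  have ht1lt : t1 < t0 := by
    rcases ht1le.lt_or_eq with h | h
    · exact h
    · exfalso; rw [h] at habs1; linarith [habs1.2]
  have ht2gt : t0 < t2 := by
    rcases ht2ge.lt_or_eq with h | h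
    · exact h
    · exfalso; rw [← h] at habs2; linarith [habs2.2]
  have ht2lt : t2 < 1 := by
    rcases ht2le.lt_or_eq with h | h
    · exact h
    · exfalso; rw [h, hP1] at habs2; exact absurd habs2.1 (by linarith)
  -- Step 3: crossing points
  have hsub10 : Set.Icc t1 t0 ⊆ Set.Icc 0 1 := Set.Icc_subset_Icc ht1nonneg ht0.2
  have hgcont : ContinuousOn (fun t => ‖P t‖) (Set.Icc 0 1) :=
    continuous_norm.comp_continuousOn hP
  obtain ⟨b', hb'mem, hb'⟩ : ∃ b' ∈ Set.Icc t1 t0, ‖P b'‖ = 3 * s := by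
    have := intermediate_value_Icc ht1le (hgcont.mono hsub10)
    have h3 : (3:ℝ) * s ∈ Set.Icc (‖P t1‖) (‖P t0‖) :=
      ⟨by linarith [habs1.2], hout'⟩
    obtain ⟨b', hb', h⟩ := this h3
    exact ⟨b', hb', h⟩
  obtain ⟨a', ha'mem, ha'⟩ : ∃ a' ∈ Set.Icc t1 b', ‖P a'‖ = 2 * s := by
    have hsub : Set.Icc t1 b' ⊆ Set.Icc 0 1 :=
      Set.Icc_subset_Icc ht1nonneg (le_trans hb'mem.2 ht0.2)
    have := intermediate_value_Icc hb'mem.1 (hgcont.mono hsub)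
    have h2 : (2:ℝ) * s ∈ Set.Icc (‖P t1‖) (‖P b'‖) :=
      ⟨habs1.2, by linarith⟩
    obtain ⟨a', ha', h⟩ := this h2
    exact ⟨a', ha', h⟩
  have hab : a' < b' := by
    rcases ha'mem.2.lt_or_eq with h | h
    · exact h
    · exfalso; rw [h, hb'] at ha'; linarith
  have ha'pos : 0 < a' := lt_of_lt_of_le ht1pos ha'mem.1
  have hb'lt2 : b' < t2 := lt_of_le_of_lt hb'mem.2 ht2gt
  have hb'le1 : b' ≤ 1 := le_trans hb'mem.2 ht0.2
  -- the crossing subcurve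
  set Q : ℝ → ℂ := fun r => P (a' + r * (b' - a')) with hQdef
  have hQcont : ContinuousOn Q (Set.Icc 0 1) := by
    have hm : Set.MapsTo (fun r : ℝ => a' + r * (b' - a')) (Set.Icc 0 1) (Set.Icc 0 1) := by
      intro r hr
      simp only [Set.mem_Icc] at hr ⊢
      constructor
      · nlinarith [hr.1, hr.2]
      · nlinarith [hr.1, hr.2]
    exact hP.comp ((by fun_prop : Continuous (fun r : ℝ => a' + r * (b' - a'))).continuousOn) hm
  have hQ0 : Q 0 ∈ Metric.sphere (0 : ℂ) (2 * s) := by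
    simp only [hQdef, zero_mul, add_zero, Metric.mem_sphere, Complex.dist_eq, sub_zero]
    exact ha'
  have hQ1' : Q 1 ∈ Metric.sphere (0 : ℂ) (3 * s) := by
    simp only [hQdef, one_mul]
    rw [show a' + (b' - a') = b' by ring]
    simpa [Metric.mem_sphere, Complex.dist_eq] using hb'
  -- Step 4: key bound
  have key : pathLen10 d Q ≤ ENNReal.ofReal (d (P t1) (P t2)) := by
    rw [pathLen10]
    refine iSup_le fun n => iSup_le fun t => iSup_le fun hmono => iSup_le fun h0 =>
      iSup_le fun h1 => ENNReal.ofReal_le_ofReal ?_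
    set f : Fin (n+1) → ℝ := fun i => a' + t i * (b' - a') with hfdef
    have hfmono : StrictMono f := fun i j h => by
      dsimp [f]
      have := hmono h
      nlinarith
    have hf0 : f 0 = a' := by simp [hfdef, h0]
    have hflast : f (Fin.last n) = b' := by simp [hfdef, h1]
    have hsum_eq : (∑ i : Fin n, d (Q (t i.castSucc)) (Q (t i.succ)))
        = ∑ i : Fin n, d (P (f i.castSucc)) (P (f i.succ)) := rfl
    rw [hsum_eq]
    set Sf := ∑ i : Fin n, d (P (f i.castSucc)) (P (f i.succ)) with hSf
    -- inner partition [a', ..., b', t2, 1]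
    set g1 : Fin (n+2) → ℝ := Fin.snoc f t2 with hg1def
    set g2 : Fin (n+3) → ℝ := Fin.snoc g1 1 with hg2def
    have hg1mono : StrictMono g1 := strictMono_snoc' hfmono (by rw [hflast]; exact hb'lt2)
    have hg2mono : StrictMono g2 := strictMono_snoc' hg1mono (by rw [hg1def, Fin.snoc_last]; exact ht2lt)
    have hg2zero : g2 0 = a' := by rw [hg2def, snoc_zero', hg1def, snoc_zero', hf0]
    have hg2last : g2 (Fin.last (n+2)) = 1 := by rw [hg2def, Fin.snoc_last]
    have hsum2 : (∑ i : Fin (n+2), d (P (g2 i.castSucc)) (P (g2 i.succ)))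
        = Sf + d (P b') (P t2) + d (P t2) v := by
      rw [hg2def, sum_snoc' d P g1 1, hg1def, sum_snoc' d P f t2, Fin.snoc_last, hflast, hP1]
    have hdPv : 0 ≤ d u v := hd_nonneg u v
    rcases ha'mem.1.lt_or_eq with hlt | heq
    · -- t1 < a' : partition [0, t1, a', ..., b', t2, 1]
      set g3 : Fin (n+4) → ℝ := Fin.cons t1 g2 with hg3def
      have hg3mono : StrictMono g3 := strictMono_cons' hg2mono (by rw [hg2zero]; exact hlt)
      set g4 : Fin (n+5) → ℝ := Fin.cons 0 g3 with hg4def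
      have hg4mono : StrictMono g4 := strictMono_cons' hg3mono (by rw [hg3def, Fin.cons_zero]; exact ht1pos)
      have hT := le_pathLen10 d P g4 hg4mono (by rw [hg4def, Fin.cons_zero])
        (by rw [hg4def, cons_last', hg3def, cons_last', hg2last])
      rw [hlen] at hT
      have hT' : (∑ i : Fin (n+4), d (P (g4 i.castSucc)) (P (g4 i.succ))) ≤ d u v :=
        (ENNReal.ofReal_le_ofReal_iff hdPv).mp hT
      have hsum4 : (∑ i : Fin (n+4), d (P (g4 i.castSucc)) (P (g4 i.succ)))
          = d u (P t1) + (d (P t1) (P a') + (Sf + d (P b') (P t2) + d (P t2) v)) := by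
        rw [hg4def, sum_cons' d P g3 0, hg3def, Fin.cons_zero, sum_cons' d P g2 t1,
          hg2zero, hsum2, hP0]
      rw [hsum4] at hT'
      have tri1 : d u v ≤ d u (P t1) + d (P t1) v := hd_tri u (P t1) v
      have tri2 : d (P t1) v ≤ d (P t1) (P t2) + d (P t2) v := hd_tri (P t1) (P t2) v
      have n1 : 0 ≤ d (P t1) (P a') := hd_nonneg _ _
      have n2 : 0 ≤ d (P b') (P t2) := hd_nonneg _ _
      linarith
    · -- t1 = a' : partition [0, a', ..., b', t2, 1]
      set g4 : Fin (n+4) → ℝ := Fin.cons 0 g2 with hg4def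
      have hg4mono : StrictMono g4 := strictMono_cons' hg2mono (by rw [hg2zero]; exact ha'pos)
      have hT := le_pathLen10 d P g4 hg4mono (by rw [hg4def, Fin.cons_zero])
        (by rw [hg4def, cons_last', hg2last])
      rw [hlen] at hT
      have hT' : (∑ i : Fin (n+3), d (P (g4 i.castSucc)) (P (g4 i.succ))) ≤ d u v :=
        (ENNReal.ofReal_le_ofReal_iff hdPv).mp hT
      have hsum4 : (∑ i : Fin (n+3), d (P (g4 i.castSucc)) (P (g4 i.succ)))
          = d u (P a') + (Sf + d (P b') (P t2) + d (P t2) v) := by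
        rw [hg4def, sum_cons' d P g2 0, hg2zero, hsum2, hP0]
      rw [hsum4] at hT'
      have heq' : P t1 = P a' := by rw [heq]
      have tri1 : d u v ≤ d u (P a') + d (P a') v := hd_tri u (P a') v
      have tri2 : d (P a') v ≤ d (P a') (P t2) + d (P t2) v := hd_tri (P a') (P t2) v
      have n2 : 0 ≤ d (P b') (P t2) := hd_nonneg _ _
      rw [heq']
      linarith
  -- Step 5: L ≤ pathLen10 d Q
  have hL : (⨅ (R : ℝ → ℂ) (_ : ContinuousOn R (Set.Icc 0 1))
      (_ : R 0 ∈ Metric.sphere (0 : ℂ) (2 * s))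
      (_ : R 1 ∈ Metric.sphere (0 : ℂ) (3 * s)), pathLen10 d R) ≤ pathLen10 d Q :=
    iInf_le_of_le Q (iInf_le_of_le hQcont (iInf_le_of_le hQ0 (iInf_le_of_le hQ1' le_rfl)))
  -- Step 6
  have hdle : ENNReal.ofReal (d (P t1) (P t2)) ≤ ⨆ x ∈ Γ, ⨆ y ∈ Γ, ENNReal.ofReal (d x y) :=
    le_iSup_of_le (P t1) (le_iSup_of_le hg1 (le_iSup_of_le (P t2) (le_iSup_of_le hg2 le_rfl)))
  exact absurd hdiam (not_lt.mpr (hL.trans (key.trans hdle)))
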